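/- Let ω > 0, τ ∈ (0,1), ζ ∈ (0,1), and suppose each map x ↦ B_i(x) is continuous with symmetric positive definite values. Let {x^k} ⊂ ℝ^n be a sequence with d^k := d_ω(x^k) ≠ 0 for all k, such that x^{k+1} = x^k + λ_k d^k where λ_k is the largest number of the form ζ^j (j a nonnegative integer) satisfying the Armijo condition F_i(x^k + λ_k d^k) ≤ F_i(x^k) + λ_k τ θ_{x^k}(d^k) for all i = 1,…,m. If the level set {x ∈ ℝ^n : F_i(x) ≤ F_i(x^0) for all i = 1,…,m} is bounded, then {x^k} has at least one accumulation point, and every accumulation point of {x^k} is a Pareto stationary point. -/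

import Mathlib

open Filter Topology
open scoped RealInnerProductSpace

noncomputable section

/-- `Euc n` is Euclidean `n`-space `ℝ^n`. -/
abbrev Euc (n : ℕ) := EuclideanSpace ℝ (Fin n)

/-- `HasDirDeriv f x d D` : the one-sided directional derivative of `f` at `x`
in direction `d` exists and equals `D`, i.e. `(f (x + α • d) - f x)/α → D` as `α → 0⁺`. -/
def HasDirDeriv {n : ℕ} (f : Euc n → ℝ) (x d : Euc n) (D : ℝ) : Prop :=
  Filter.Tendsto (fun α : ℝ => (f (x + α • d) - f x) / α)
    (nhdsWithin 0 (Set.Ioi 0)) (nhds D)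

/-- `x` is Pareto stationary for the objectives `F i`:
for every direction `d`, `max_i F_i'(x; d) ≥ 0`, i.e. some objective has
nonnegative directional derivative in direction `d`. -/
def ParetoStationary {n m : ℕ} (F : Fin m → Euc n → ℝ) (x : Euc n) : Prop :=
  ∀ d : Euc n, ∃ i : Fin m, ∃ D : ℝ, HasDirDeriv (F i) x d D ∧ 0 ≤ D

/-- `θ_x(d) = max_i { ⟪∇g_i(x), d⟫ + ½⟪d, B_i(x) d⟫ + h_i(x+d) - h_i(x) }`. -/
def theta {n m : ℕ} (g h : Fin m → Euc n → ℝ)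
    (B : Fin m → Euc n → (Euc n →L[ℝ] Euc n)) (x d : Euc n) : ℝ :=
  ⨆ i : Fin m, (⟪gradient (g i) x, d⟫ + (1 / 2) * ⟪d, B i x d⟫ + h i (x + d) - h i x)

/-- `φ_{ω,x}(d) = θ_x(d) + (ω/2)‖d‖²`. -/
def phi {n m : ℕ} (g h : Fin m → Euc n → ℝ)
    (B : Fin m → Euc n → (Euc n →L[ℝ] Euc n)) (ω : ℝ) (x d : Euc n) : ℝ :=
  theta g h B x d + (ω / 2) * ‖d‖ ^ 2

/-! ### Auxiliary lemmas -/

lemma gradInner {n : ℕ} (f : Euc n → ℝ) (x v : Euc n) :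
    ⟪gradient f x, v⟫ = fderiv ℝ f x v := by
  simp [gradient, InnerProductSpace.toDual_symm_apply]

lemma grad_line_hasDerivAt {n : ℕ} {f : Euc n → ℝ} (hf : ContDiff ℝ 2 f)
    (y v : Euc n) (s : ℝ) :
    HasDerivAt (fun t : ℝ => f (y + t • v)) ⟪gradient f (y + s • v), v⟫ s := by
  have h1 : HasDerivAt (fun t : ℝ => y + t • v) v s := by
    simpa using ((hasDerivAt_id s).smul_const v).const_add y
  have h2 := ((hf.differentiable (by norm_num)).differentiableAt.hasFDerivAt
      (x := y + s • v)).comp_hasDerivAt s h1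
  rw [gradInner]
  exact h2

/-- slope convergence for the smooth part -/
lemma gslope_tendsto {n : ℕ} {f : Euc n → ℝ} (hf : ContDiff ℝ 2 f) (x d : Euc n) :
    Tendsto (fun α : ℝ => (f (x + α • d) - f x) / α) (𝓝[>] 0)
      (𝓝 ⟪gradient f x, d⟫) := by
  have h := grad_line_hasDerivAt hf x d 0
  rw [hasDerivAt_iff_tendsto_slope] at h
  simp only [zero_smul, add_zero] at h
  have h' := h.mono_left (nhdsWithin_mono 0 (by intro t ht; exact ne_of_gt ht))
  refine h'.congr (fun t => ?_)
  rw [slope_def_field]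
  simp only [zero_smul, add_zero, sub_zero]

/-- convexity of t ↦ h (x + t • d) -/
lemma line_convexOn {n : ℕ} {h : Euc n → ℝ} (hh : ConvexOn ℝ Set.univ h)
    (x d : Euc n) : ConvexOn ℝ Set.univ (fun t : ℝ => h (x + t • d)) := by
  have := hh.comp_affineMap (AffineMap.lineMap x (x + d))
  have he : (fun t : ℝ => h (x + t • d)) = h ∘ (AffineMap.lineMap x (x + d)) := by
    funext t
    simp [AffineMap.lineMap_apply]
    congr 1
    module
  rw [he]
  simpa using this

/-- segment inequality: for t ∈ [0,1], h(x + t•v) ≤ h x + t*(h (x+v) - h x) -/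
lemma hseg {n : ℕ} {h : Euc n → ℝ} (hh : ConvexOn ℝ Set.univ h)
    (x v : Euc n) {t : ℝ} (ht0 : 0 ≤ t) (ht1 : t ≤ 1) :
    h (x + t • v) ≤ h x + t * (h (x + v) - h x) := by
  have := hh.2 (Set.mem_univ x) (Set.mem_univ (x + v))
    (by linarith : (0:ℝ) ≤ 1 - t) ht0 (by ring)
  have he : (1 - t) • x + t • (x + v) = x + t • v := by module
  rw [he] at this
  simp only [smul_eq_mul] at this
  nlinarith [this]

/-- one-sided slope limit of a convex function -/
lemma hslope_tendsto {n : ℕ} {h : Euc n → ℝ} (hh : ConvexOn ℝ Set.univ h)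
    (x d : Euc n) :
    ∃ D : ℝ, Tendsto (fun α : ℝ => (h (x + α • d) - h x) / α) (𝓝[>] 0) (𝓝 D) := by
  set ψ : ℝ → ℝ := fun t => h (x + t • d) with hψ
  have hψc : ConvexOn ℝ Set.univ ψ := line_convexOn hh x d
  set q : ℝ → ℝ := fun t => (ψ t - ψ 0) / t with hq
  have hmono : MonotoneOn q (Set.Ioi (0:ℝ)) := by
    intro s hs t ht hst
    have := hψc.secant_mono (a := 0) (x := s) (y := t) (Set.mem_univ _)
      (Set.mem_univ _) (Set.mem_univ _) (ne_of_gt hs) (ne_of_gt ht) hst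
    simpa [q, sub_zero] using this
  have hbdd : BddBelow (q '' Set.Ioi (0:ℝ)) := by
    refine ⟨q (-1), ?_⟩
    rintro y ⟨t, ht, rfl⟩
    have := hψc.secant_mono (a := 0) (x := -1) (y := t) (Set.mem_univ _)
      (Set.mem_univ _) (Set.mem_univ _) (by norm_num) (ne_of_gt ht)
      (by linarith [Set.mem_Ioi.1 ht])
    simpa [q, sub_zero] using this
  refine ⟨sInf (q '' Set.Ioi 0), ?_⟩
  have := MonotoneOn.tendsto_nhdsGT hmono hbdd
  refine this.congr' ?_
  filter_upwards [self_mem_nhdsWithin] with t ht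
  simp only [q, ψ, zero_smul, add_zero]

/-- the gradient of a C² function is Lipschitz on every closed ball -/
lemma grad_lip {n : ℕ} {f : Euc n → ℝ} (hf : ContDiff ℝ 2 f) (R : ℝ) (hR : 0 ≤ R) :
    ∃ L : ℝ, 0 ≤ L ∧ ∀ u ∈ Metric.closedBall (0 : Euc n) R,
      ∀ w ∈ Metric.closedBall (0 : Euc n) R,
      ‖gradient f u - gradient f w‖ ≤ L * ‖u - w‖ := by
  set f' := fderiv ℝ f with hf'def
  have hf'c : ContDiff ℝ 1 f' := hf.fderiv_right (by norm_num)
  have hcont : Continuous fun x => ‖fderiv ℝ f' x‖ :=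
    (hf'c.continuous_fderiv (by norm_num)).norm
  obtain ⟨x0, _, hx0⟩ := (isCompact_closedBall (0 : Euc n) R).exists_isMaxOn
    ⟨0, by simp [hR]⟩ hcont.continuousOn
  refine ⟨‖fderiv ℝ f' x0‖, norm_nonneg (fderiv ℝ f' x0), fun u hu w hw => ?_⟩
  have key : ‖f' u - f' w‖ ≤ ‖fderiv ℝ f' x0‖ * ‖u - w‖ :=
    (convex_closedBall _ _).norm_image_sub_le_of_norm_fderiv_le
      (fun x _ => (hf'c.differentiable (by norm_num)).differentiableAt)
      (fun x hx => hx0 hx) hw hu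
  have heq : gradient f u - gradient f w
      = (InnerProductSpace.toDual ℝ (Euc n)).symm (f' u - f' w) := by
    simp [gradient, map_sub, f']
  rw [heq, LinearIsometryEquiv.norm_map]
  exact key

/-- descent estimate for the smooth part -/
lemma gdescent {n : ℕ} {f : Euc n → ℝ} (hf : ContDiff ℝ 2 f) {R L : ℝ} (hL : 0 ≤ L)
    (hlip : ∀ u ∈ Metric.closedBall (0 : Euc n) R, ∀ w ∈ Metric.closedBall (0 : Euc n) R,
      ‖gradient f u - gradient f w‖ ≤ L * ‖u - w‖)
    (y v : Euc n)
    (hsegm : ∀ t : ℝ, t ∈ Set.Icc (0:ℝ) 1 → y + t • v ∈ Metric.closedBall (0 : Euc n) R) :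
    f (y + v) ≤ f y + ⟪gradient f y, v⟫ + L * ‖v‖ ^ 2 := by
  have hderiv : ∀ s : ℝ, HasDerivAt (fun t : ℝ => f (y + t • v))
      ⟪gradient f (y + s • v), v⟫ s := fun s => grad_line_hasDerivAt hf y v s
  obtain ⟨c, hc, hceq⟩ := exists_hasDerivAt_eq_slope (fun t : ℝ => f (y + t • v))
    (fun s => ⟪gradient f (y + s • v), v⟫) zero_lt_one
    (fun t _ => (hderiv t).continuousAt.continuousWithinAt)
    (fun t _ => hderiv t)
  simp only [one_smul, zero_smul, add_zero, sub_zero, div_one] at hceq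
  have hcmem : y + c • v ∈ Metric.closedBall (0 : Euc n) R := hsegm c ⟨hc.1.le, hc.2.le⟩
  have hymem : y ∈ Metric.closedBall (0 : Euc n) R := by
    simpa using hsegm 0 ⟨le_rfl, zero_le_one⟩
  have hsplit : ⟪gradient f (y + c • v), v⟫
      = ⟪gradient f y, v⟫ + ⟪gradient f (y + c • v) - gradient f y, v⟫ := by
    rw [inner_sub_left]; ring
  have hcs : ⟪gradient f (y + c • v) - gradient f y, v⟫ ≤ L * ‖v‖ ^ 2 := by
    calc ⟪gradient f (y + c • v) - gradient f y, v⟫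
        ≤ ‖gradient f (y + c • v) - gradient f y‖ * ‖v‖ := real_inner_le_norm _ _
      _ ≤ (L * ‖(y + c • v) - y‖) * ‖v‖ :=
          mul_le_mul_of_nonneg_right (hlip _ hcmem _ hymem) (norm_nonneg _)
      _ ≤ L * ‖v‖ ^ 2 := by
          have hnn : ‖(y + c • v) - y‖ = c * ‖v‖ := by
            simp [norm_smul, abs_of_pos hc.1]
          rw [hnn]
          nlinarith [norm_nonneg v, hc.1, hc.2,
            mul_nonneg hL (mul_nonneg (norm_nonneg v) (norm_nonneg v))]
  nlinarith [hceq, hcs, hsplit]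

section ThetaLemmas

variable {n m : ℕ} {g h : Fin m → Euc n → ℝ} {B : Fin m → Euc n → (Euc n →L[ℝ] Euc n)}

lemma le_theta (hm : 0 < m) (x d : Euc n) (i : Fin m) :
    ⟪gradient (g i) x, d⟫ + (1 / 2) * ⟪d, B i x d⟫ + h i (x + d) - h i x
      ≤ theta g h B x d := by
  have : Nonempty (Fin m) := ⟨⟨0, hm⟩⟩
  exact le_ciSup (f := fun i : Fin m => ⟪gradient (g i) x, d⟫ + (1 / 2) * ⟪d, B i x d⟫
    + h i (x + d) - h i x) (Set.Finite.bddAbove (Set.finite_range _)) i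

lemma theta_le (hm : 0 < m) {x d : Euc n} {c : ℝ}
    (hc : ∀ i, ⟪gradient (g i) x, d⟫ + (1 / 2) * ⟪d, B i x d⟫ + h i (x + d) - h i x ≤ c) :
    theta g h B x d ≤ c := by
  have : Nonempty (Fin m) := ⟨⟨0, hm⟩⟩
  exact ciSup_le hc

lemma theta_zero (hm : 0 < m) (x : Euc n) : theta g h B x 0 = 0 := by
  have : Nonempty (Fin m) := ⟨⟨0, hm⟩⟩
  have h0 : ∀ i : Fin m, ⟪gradient (g i) x, (0 : Euc n)⟫
      + (1 / 2) * ⟪(0 : Euc n), B i x 0⟫ + h i (x + 0) - h i x = 0 := by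
    intro i
    simp
  simp only [theta, h0, ciSup_const]

/-- continuity of each term in `x`, for fixed `d` -/
lemma term_continuous (hg : ∀ i, ContDiff ℝ 2 (g i)) (hh : ∀ i, ConvexOn ℝ Set.univ (h i))
    (hBcont : ∀ i, Continuous (fun x => B i x)) (i : Fin m) (d : Euc n) :
    Continuous (fun x : Euc n =>
      ⟪gradient (g i) x, d⟫ + (1 / 2) * ⟪d, B i x d⟫ + h i (x + d) - h i x) := by
  have hgc : Continuous (fun x : Euc n => gradient (g i) x) := by
    simp only [gradient]
    exact (InnerProductSpace.toDual ℝ (Euc n)).symm.continuous.comp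
      ((hg i).continuous_fderiv (by norm_num))
  have hhc : Continuous (h i) := by
    rw [← continuousOn_univ]
    exact (hh i).continuousOn isOpen_univ
  have hB : Continuous (fun x : Euc n => B i x d) := (hBcont i).clm_apply continuous_const
  exact (((hgc.inner continuous_const).add
    (continuous_const.mul (continuous_const.inner hB))).add
    (hhc.comp (continuous_id.add continuous_const))).sub hhc

end ThetaLemmas

set_option maxHeartbeats 1000000 in
/-- with a bounded level set, the sequence generated by the
proximal quasi-Newton method with Armijo line searches has accumulation points,
and all of them are Pareto stationary. -/
theorem algorithm_one_bounded_level_set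
    {n m : ℕ} (g h : Fin m → Euc n → ℝ)
    (B : Fin m → Euc n → (Euc n →L[ℝ] Euc n))
    (hm : 0 < m)
    (hg : ∀ i, ContDiff ℝ 2 (g i))
    (hsc : ∀ i, ∃ a : ℝ, 0 < a ∧ ∀ x y : Euc n,
      a * ‖x - y‖ ^ 2 ≤ ⟪gradient (g i) x - gradient (g i) y, x - y⟫)
    (hh : ∀ i, ConvexOn ℝ Set.univ (h i))
    (hBsymm : ∀ i x (u v : Euc n), ⟪B i x u, v⟫ = ⟪u, B i x v⟫)
    (hBpos : ∀ i x (d : Euc n), d ≠ 0 → 0 < ⟪d, B i x d⟫)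
    (hBcont : ∀ i, Continuous (fun x => B i x))
    (ω τ ζ : ℝ) (hω : 0 < ω)
    (hτ : τ ∈ Set.Ioo (0 : ℝ) 1) (hζ : ζ ∈ Set.Ioo (0 : ℝ) 1)
    (dω : Euc n → Euc n)
    (hmin : ∀ y d, phi g h B ω y (dω y) ≤ phi g h B ω y d)
    (huniq : ∀ y d, (∀ d', phi g h B ω y d ≤ phi g h B ω y d') → d = dω y)
    (x : ℕ → Euc n) (lam : ℕ → ℝ)
    (hd : ∀ k, dω (x k) ≠ 0)
    (hstep : ∀ k, x (k + 1) = x k + lam k • dω (x k))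
    (hlam_form : ∀ k, ∃ j : ℕ, lam k = ζ ^ j)
    (harm : ∀ k i,
      g i (x k + lam k • dω (x k)) + h i (x k + lam k • dω (x k))
        ≤ g i (x k) + h i (x k) + lam k * τ * theta g h B (x k) (dω (x k)))
    (hlam_max : ∀ k (j : ℕ), lam k < ζ ^ j →
      ∃ i, g i (x k) + h i (x k) + ζ ^ j * τ * theta g h B (x k) (dω (x k))
        < g i (x k + ζ ^ j • dω (x k)) + h i (x k + ζ ^ j • dω (x k)))
    (hlevel : Bornology.IsBounded
      {y : Euc n | ∀ i, g i y + h i y ≤ g i (x 0) + h i (x 0)}) :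
    (∃ a : Euc n, MapClusterPt a atTop x) ∧
      ∀ a : Euc n, MapClusterPt a atTop x →
        ParetoStationary (fun i y => g i y + h i y) a := by
  have hFinNe : Nonempty (Fin m) := ⟨⟨0, hm⟩⟩
  set i0 : Fin m := ⟨0, hm⟩ with hi0
  -- continuity of the objectives
  have hhc : ∀ i, Continuous (h i) := by
    intro i
    rw [← continuousOn_univ]
    exact (hh i).continuousOn isOpen_univ
  have hgc : ∀ i, Continuous (g i) := fun i => (hg i).continuous
  have hFc : ∀ i, Continuous (fun y => g i y + h i y) := fun i => (hgc i).add (hhc i)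
  -- step sizes
  have hlam_pos : ∀ k, 0 < lam k := by
    intro k
    obtain ⟨j, hj⟩ := hlam_form k
    rw [hj]; exact pow_pos hζ.1 j
  -- θ_k + (ω/2)‖d_k‖² ≤ 0
  have hphi0 : ∀ y, phi g h B ω y (dω y) ≤ 0 := by
    intro y
    have := hmin y 0
    simpa [phi, theta_zero hm] using this
  have hθd : ∀ y, theta g h B y (dω y) + (ω/2) * ‖dω y‖^2 ≤ 0 := by
    intro y
    have := hphi0 y
    simpa [phi] using this
  have hθ0 : ∀ y, theta g h B y (dω y) ≤ 0 := by
    intro y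
    nlinarith [hθd y, sq_nonneg ‖dω y‖, hω.le, norm_nonneg (dω y)]
  -- decrease
  have hdec : ∀ k i, g i (x (k+1)) + h i (x (k+1)) ≤ g i (x k) + h i (x k)
      + lam k * τ * theta g h B (x k) (dω (x k)) := by
    intro k i
    rw [hstep k]
    exact harm k i
  have hdec' : ∀ k i, g i (x (k+1)) + h i (x (k+1)) ≤ g i (x k) + h i (x k) := by
    intro k i
    have h1 := hdec k i
    have h2 : lam k * τ * theta g h B (x k) (dω (x k)) ≤ 0 :=
      mul_nonpos_of_nonneg_of_nonpos (le_of_lt (mul_pos (hlam_pos k) hτ.1)) (hθ0 (x k))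
    linarith
  have hxS : ∀ k, x k ∈ {y : Euc n | ∀ i, g i y + h i y ≤ g i (x 0) + h i (x 0)} := by
    intro k
    induction k with
    | zero => exact fun i => le_rfl
    | succ k ih => exact fun i => (hdec' k i).trans (ih i)
  -- part 1 : existence of a cluster point
  obtain ⟨a0, _, φs, hφs, hφt⟩ := tendsto_subseq_of_bounded hlevel hxS
  refine ⟨⟨a0, MapClusterPt.of_comp hφs.tendsto_atTop hφt.mapClusterPt⟩, ?_⟩
  -- bounding ball for the level set
  obtain ⟨r0, hr0⟩ := hlevel.subset_closedBall 0
  obtain ⟨R0, hR0nn, hxball⟩ : ∃ R0 : ℝ, 0 ≤ R0 ∧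
      ∀ k, x k ∈ Metric.closedBall (0 : Euc n) R0 :=
    ⟨max r0 0, le_max_right _ _, fun k =>
      Metric.closedBall_subset_closedBall (le_max_left _ _) (hr0 (hxS k))⟩
  -- lam * τ * θ_k → 0
  have hcross : Tendsto (fun k => lam k * τ * theta g h B (x k) (dω (x k)))
      atTop (𝓝 0) := by
    obtain ⟨ymin, _, hymin⟩ := (isCompact_closedBall (0 : Euc n) R0).exists_isMinOn
      ⟨0, by simp [hR0nn]⟩ (hFc i0).continuousOn
    have hbdd : BddBelow (Set.range fun k => g i0 (x k) + h i0 (x k)) := by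
      refine ⟨g i0 ymin + h i0 ymin, ?_⟩
      rintro y ⟨k, rfl⟩
      exact hymin (hxball k)
    have hanti : Antitone fun k => g i0 (x k) + h i0 (x k) :=
      antitone_nat_of_succ_le (fun k => hdec' k i0)
    have hconv := tendsto_atTop_ciInf hanti hbdd
    have hsucc : Tendsto (fun k => g i0 (x (k+1)) + h i0 (x (k+1))) atTop
        (𝓝 (⨅ k, g i0 (x k) + h i0 (x k))) := hconv.comp (tendsto_add_atTop_nat 1)
    have hdiff : Tendsto (fun k => (g i0 (x (k+1)) + h i0 (x (k+1)))
        - (g i0 (x k) + h i0 (x k))) atTop (𝓝 0) := by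
      simpa using hsucc.sub hconv
    refine tendsto_of_tendsto_of_tendsto_of_le_of_le hdiff tendsto_const_nhds
      (fun k => ?_) (fun k => ?_)
    · have := hdec k i0
      linarith
    · exact mul_nonpos_of_nonneg_of_nonpos
        (le_of_lt (mul_pos (hlam_pos k) hτ.1)) (hθ0 (x k))
  -- part 2
  intro a ha
  have hphidef : ∀ (y d' : Euc n),
      phi g h B ω y d' = theta g h B y d' + (ω/2) * ‖d'‖^2 := fun _ _ => rfl
  have hclaim : 0 ≤ phi g h B ω a (dω a) := by
    by_contra hneg
    push_neg at hneg
    -- max of the gradient norm of g i0 on the ball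
    have hgradc0 : Continuous (fun y : Euc n => gradient (g i0) y) := by
      simp only [gradient]
      exact (InnerProductSpace.toDual ℝ (Euc n)).symm.continuous.comp
        ((hg i0).continuous_fderiv (by norm_num))
    have hgradc : Continuous (fun y : Euc n => ‖gradient (g i0) y‖) := hgradc0.norm
    obtain ⟨M, hM0, hMb⟩ : ∃ M : ℝ, 0 ≤ M ∧ ∀ k, ‖gradient (g i0) (x k)‖ ≤ M := by
      obtain ⟨yM, _, hyM⟩ := (isCompact_closedBall (0 : Euc n) R0).exists_isMaxOn
        ⟨0, by simp [hR0nn]⟩ hgradc.continuousOn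
      exact ⟨‖gradient (g i0) yM‖, norm_nonneg _, fun k => hyM (hxball k)⟩
    -- oscillation bound for h i0
    obtain ⟨C0, hC00, hC0b⟩ : ∃ C0 : ℝ, 0 ≤ C0 ∧
        ∀ y ∈ Metric.closedBall (0 : Euc n) R0,
        ∀ z ∈ Metric.closedBall (0 : Euc n) (R0 + 1), h i0 y - h i0 z ≤ C0 := by
      obtain ⟨yhx, _, hyhx⟩ := (isCompact_closedBall (0 : Euc n) R0).exists_isMaxOn
        ⟨0, by simp [hR0nn]⟩ (hhc i0).continuousOn
      obtain ⟨yhn, _, hyhn⟩ := (isCompact_closedBall (0 : Euc n) (R0 + 1)).exists_isMinOn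
        ⟨0, by simp; linarith⟩ (hhc i0).continuousOn
      refine ⟨max 0 (h i0 yhx - h i0 yhn), le_max_left _ _, fun y hy z hz => ?_⟩
      have h1 : h i0 y ≤ h i0 yhx := hyhx hy
      have h2 : h i0 yhn ≤ h i0 z := hyhn hz
      have h3 : h i0 yhx - h i0 yhn ≤ max 0 (h i0 yhx - h i0 yhn) := le_max_right _ _
      linarith
    -- bound on the step directions
    obtain ⟨Bd, hBd1, hdbound⟩ : ∃ Bd : ℝ, 1 ≤ Bd ∧ ∀ k, ‖dω (x k)‖ ≤ Bd := by
      refine ⟨max 1 (2*(M + C0)/ω), le_max_left _ _, fun k => ?_⟩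
      by_cases hsmall : ‖dω (x k)‖ ≤ 1
      · exact hsmall.trans (le_max_left _ _)
      push_neg at hsmall
      have hinner : -(M * ‖dω (x k)‖) ≤ ⟪gradient (g i0) (x k), dω (x k)⟫ := by
        have h1 : |⟪gradient (g i0) (x k), dω (x k)⟫|
            ≤ ‖gradient (g i0) (x k)‖ * ‖dω (x k)‖ := abs_real_inner_le_norm _ _
        have h2 := hMb k
        have h3 := abs_le.1 h1
        nlinarith [norm_nonneg (dω (x k))]
      have hhlow : -(C0 * ‖dω (x k)‖) ≤ h i0 (x k + dω (x k)) - h i0 (x k) := by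
        have hnpos : (0:ℝ) < ‖dω (x k)‖ := by linarith
        have ht0 : (0:ℝ) < 1/‖dω (x k)‖ := by positivity
        have ht1 : 1/‖dω (x k)‖ ≤ 1 := by
          rw [div_le_one hnpos]; linarith
        have hs := hseg (hh i0) (x k) (dω (x k)) ht0.le ht1
        have hmem : x k + (1/‖dω (x k)‖) • (dω (x k)) ∈
            Metric.closedBall (0 : Euc n) (R0 + 1) := by
          have h1 : ‖x k + (1/‖dω (x k)‖) • dω (x k)‖
              ≤ ‖x k‖ + ‖(1/‖dω (x k)‖) • dω (x k)‖ := norm_add_le _ _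
          have h2 : ‖(1/‖dω (x k)‖) • dω (x k)‖ = 1 := by
            rw [norm_smul, Real.norm_eq_abs, abs_of_pos ht0]
            field_simp
          have h3 : ‖x k‖ ≤ R0 := by simpa using hxball k
          simp only [Metric.mem_closedBall, dist_zero_right]
          linarith
        have hosc : h i0 (x k) - h i0 (x k + (1/‖dω (x k)‖) • dω (x k)) ≤ C0 :=
          hC0b _ (hxball k) _ hmem
        -- hs : h(x + t d) ≤ h x + t (h (x+d) - h x) with t = 1/‖d‖
        have hq : -(C0) ≤ (1/‖dω (x k)‖) * (h i0 (x k + dω (x k)) - h i0 (x k)) := by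
          linarith
        have hmul := mul_le_mul_of_nonneg_left hq (norm_nonneg (dω (x k)))
        have hcanc : ‖dω (x k)‖ * ((1/‖dω (x k)‖) *
            (h i0 (x k + dω (x k)) - h i0 (x k)))
            = h i0 (x k + dω (x k)) - h i0 (x k) := by
          field_simp
        rw [hcanc] at hmul
        linarith
      have hterm := le_theta (g := g) (h := h) (B := B) hm (x k) (dω (x k)) i0
      have hBp : 0 < ⟪dω (x k), B i0 (x k) (dω (x k))⟫ := hBpos i0 (x k) _ (hd k)
      have hθdk := hθd (x k)
      have hkey : ω/2 * ‖dω (x k)‖^2 ≤ (M + C0) * ‖dω (x k)‖ := by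
        nlinarith [hterm, hθdk, hinner, hhlow, hBp]
      have h2' : ‖dω (x k)‖ ≤ 2*(M + C0)/ω := by
        rw [le_div_iff₀ hω]
        nlinarith [norm_nonneg (dω (x k)), hsmall]
      exact h2'.trans (le_max_right _ _)
    have hBd0 : (0:ℝ) < Bd := by linarith
    -- gradient Lipschitz constants on the big ball
    have hR2nn : (0:ℝ) ≤ R0 + Bd + 1 := by linarith
    choose Lf hLf0 hLfl using fun i => grad_lip (hg i) (R0 + Bd + 1) hR2nn
    obtain ⟨iL, hiL⟩ := Finite.exists_max Lf
    obtain ⟨L, hL0, hLi⟩ : ∃ L : ℝ, 0 ≤ L ∧ ∀ i, Lf i ≤ L := ⟨Lf iL, hLf0 iL, hiL⟩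
    -- descent estimate along the iterates
    have hdesc : ∀ k (t : ℝ), 0 < t → t ≤ 1 → ∀ i,
        g i (x k + t • dω (x k)) + h i (x k + t • dω (x k))
          ≤ g i (x k) + h i (x k) + t * theta g h B (x k) (dω (x k)) + L * t^2 * Bd^2 := by
      intro k t ht0 ht1 i
      have hsegmem : ∀ s : ℝ, s ∈ Set.Icc (0:ℝ) 1 →
          x k + s • (t • dω (x k)) ∈ Metric.closedBall (0 : Euc n) (R0 + Bd + 1) := by
        intro s hs
        have h1 : ‖x k + s • t • dω (x k)‖ ≤ ‖x k‖ + ‖s • t • dω (x k)‖ := norm_add_le _ _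
        have h2 : ‖s • t • dω (x k)‖ = s * (t * ‖dω (x k)‖) := by
          rw [norm_smul, norm_smul, Real.norm_eq_abs, Real.norm_eq_abs,
            abs_of_nonneg hs.1, abs_of_pos ht0]
        have h3 : ‖x k‖ ≤ R0 := by simpa using hxball k
        have h4 : s * (t * ‖dω (x k)‖) ≤ Bd := by
          have h5 : t * ‖dω (x k)‖ ≤ ‖dω (x k)‖ :=
            mul_le_of_le_one_left (norm_nonneg _) ht1
          have h6 : s * (t * ‖dω (x k)‖) ≤ t * ‖dω (x k)‖ :=
            mul_le_of_le_one_left (mul_nonneg ht0.le (norm_nonneg _)) hs.2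
          linarith [hdbound k]
        simp only [Metric.mem_closedBall, dist_zero_right]
        linarith [h2 ▸ h1]
      have hgd := gdescent (hg i) (hLf0 i) (hLfl i) (x k) (t • dω (x k)) hsegmem
      have hginner : ⟪gradient (g i) (x k), t • dω (x k)⟫
          = t * ⟪gradient (g i) (x k), dω (x k)⟫ := real_inner_smul_right _ _ _
      rw [hginner] at hgd
      have hhd := hseg (hh i) (x k) (dω (x k)) ht0.le ht1
      have hn2 : ‖t • dω (x k)‖^2 = t^2 * ‖dω (x k)‖^2 := by
        rw [norm_smul, Real.norm_eq_abs, abs_of_pos ht0, mul_pow]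
      have hterm := le_theta (g := g) (h := h) (B := B) hm (x k) (dω (x k)) i
      have hBp : 0 < ⟪dω (x k), B i (x k) (dω (x k))⟫ := hBpos i (x k) _ (hd k)
      have hLbd : Lf i * ‖t • dω (x k)‖^2 ≤ L * t^2 * Bd^2 := by
        rw [hn2]
        have e1 : Lf i * (t^2 * ‖dω (x k)‖^2) ≤ L * (t^2 * ‖dω (x k)‖^2) :=
          mul_le_mul_of_nonneg_right (hLi i) (by positivity)
        have e2 : ‖dω (x k)‖^2 ≤ Bd^2 :=
          pow_le_pow_left₀ (norm_nonneg _) (hdbound k) 2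
        have e3 : L * (t^2 * ‖dω (x k)‖^2) ≤ L * (t^2 * Bd^2) :=
          mul_le_mul_of_nonneg_left
            (mul_le_mul_of_nonneg_left e2 (sq_nonneg t)) hL0
        nlinarith [e1, e3]
      have hmul := mul_le_mul_of_nonneg_left hterm ht0.le
      have hpos : 0 ≤ t * ⟪dω (x k), B i (x k) (dω (x k))⟫ :=
        mul_nonneg ht0.le hBp.le
      nlinarith [hgd, hhd, hmul, hpos, hLbd]
    -- choice of ε
    obtain ⟨ε, hεpos, hεle1, hεle2⟩ : ∃ ε : ℝ, 0 < ε ∧ ε ≤ 1/2 ∧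
        ε * (2*(L * Bd^2 + 1)) ≤ ζ * ((1 - τ) * (-(phi g h B ω a (dω a))/2)) := by
      have hQ : (0:ℝ) < 2*(L * Bd^2 + 1) := by positivity
      have hP : (0:ℝ) < ζ * ((1 - τ) * (-(phi g h B ω a (dω a))/2)) :=
        mul_pos hζ.1 (mul_pos (by linarith [hτ.2]) (by linarith))
      refine ⟨min (1/2) (ζ * ((1 - τ) * (-(phi g h B ω a (dω a))/2)) / (2*(L * Bd^2 + 1))),
        lt_min (by norm_num) (div_pos hP hQ), min_le_left _ _, ?_⟩
      have := min_le_right (1/2:ℝ)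
        (ζ * ((1 - τ) * (-(phi g h B ω a (dω a))/2)) / (2*(L * Bd^2 + 1)))
      calc min (1/2:ℝ) (ζ * ((1 - τ) * (-(phi g h B ω a (dω a))/2)) / (2*(L * Bd^2 + 1)))
            * (2*(L * Bd^2 + 1))
          ≤ (ζ * ((1 - τ) * (-(phi g h B ω a (dω a))/2)) / (2*(L * Bd^2 + 1)))
            * (2*(L * Bd^2 + 1)) := by
            exact mul_le_mul_of_nonneg_right this hQ.le
        _ = ζ * ((1 - τ) * (-(phi g h B ω a (dω a))/2)) := by field_simp
    -- the neighbourhood event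
    have hnb : ∀ᶠ y in 𝓝 a, phi g h B ω y (dω a) ≤ phi g h B ω a (dω a)/2 := by
      have hev : ∀ᶠ y in 𝓝 a, ∀ i,
          ⟪gradient (g i) y, dω a⟫ + (1/2) * ⟪dω a, B i y (dω a)⟫ + h i (y + dω a) - h i y
            ≤ ⟪gradient (g i) a, dω a⟫ + (1/2) * ⟪dω a, B i a (dω a)⟫
              + h i (a + dω a) - h i a + (-(phi g h B ω a (dω a))/2) := by
        refine eventually_all.2 fun i => ?_
        have hc := (term_continuous hg hh hBcont i (dω a)).tendsto a
        exact hc.eventually_le_const (by linarith)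
      filter_upwards [hev] with y hy
      have hθy : theta g h B y (dω a)
          ≤ theta g h B a (dω a) + (-(phi g h B ω a (dω a))/2) := by
        apply theta_le hm
        intro i
        refine le_trans (hy i) ?_
        linarith [le_theta (g := g) (h := h) (B := B) hm a (dω a) i]
      have h1 := hphidef y (dω a)
      have h2 := hphidef a (dω a)
      linarith
    have hfreq : ∃ᶠ k in atTop, phi g h B ω (x k) (dω a) ≤ phi g h B ω a (dω a)/2 :=
      (mapClusterPt_iff_frequently.mp ha) _ hnb
    -- the eventual smallness of the step sizes
    have hpos1 : (0:ℝ) < τ * (-(phi g h B ω a (dω a))/2) :=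
      mul_pos hτ.1 (by linarith)
    have habs : Tendsto (fun k => |lam k * τ * theta g h B (x k) (dω (x k))|) atTop (𝓝 0) := by
      have := hcross.abs
      simpa using this
    have hev2 : ∀ᶠ k in atTop, |lam k * τ * theta g h B (x k) (dω (x k))|
        < τ * (-(phi g h B ω a (dω a))/2) * ε :=
      habs.eventually_lt_const (by positivity)
    obtain ⟨k, hk1, hk2⟩ := (hfreq.and_eventually hev2).exists
    -- θ_k is boundedly negative
    have hθk : theta g h B (x k) (dω (x k)) ≤ phi g h B ω a (dω a)/2 := by
      have h1 := hmin (x k) (dω a)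
      have h2 := hphidef (x k) (dω (x k))
      have h3 : 0 ≤ (ω/2) * ‖dω (x k)‖^2 := by positivity
      linarith
    -- the step size is small
    have hlamlt : lam k < ε := by
      have hθ0k := hθ0 (x k)
      have habs2 : |lam k * τ * theta g h B (x k) (dω (x k))|
          = lam k * τ * (-(theta g h B (x k) (dω (x k)))) := by
        rw [abs_of_nonpos (mul_nonpos_of_nonneg_of_nonpos
          (le_of_lt (mul_pos (hlam_pos k) hτ.1)) hθ0k)]
        ring
      rw [habs2] at hk2
      nlinarith [hk2, hθk, hlam_pos k, hpos1, hτ.1, hneg,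
        mul_le_mul_of_nonneg_left hθk (mul_pos (hlam_pos k) hτ.1).le]
    -- the previous step size failed the Armijo test
    obtain ⟨j, hj⟩ := hlam_form k
    have hjne : j ≠ 0 := by
      intro h0
      rw [h0, pow_zero] at hj
      linarith [hlamlt, hεle1, hj.le]
    obtain ⟨j', rfl⟩ := Nat.exists_eq_succ_of_ne_zero hjne
    have ht0' : (0:ℝ) < ζ ^ j' := pow_pos hζ.1 j'
    have htpow : lam k < ζ ^ j' := by
      rw [hj, pow_succ]
      nlinarith [ht0', hζ.2]
    obtain ⟨i, hi⟩ := hlam_max k j' htpow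
    have ht1' : ζ ^ j' ≤ 1 := pow_le_one₀ hζ.1.le hζ.2.le
    have hde := hdesc k (ζ ^ j') ht0' ht1' i
    -- Armijo failure vs descent estimate
    have hfin : ζ ^ j' * τ * theta g h B (x k) (dω (x k))
        < ζ ^ j' * theta g h B (x k) (dω (x k)) + L * (ζ ^ j')^2 * Bd^2 := by
      linarith [hi, hde]
    have hfin2 : (1 - τ) * (-(theta g h B (x k) (dω (x k)))) < L * ζ ^ j' * Bd^2 := by
      nlinarith [hfin, ht0']
    -- the step ζ ^ j' is itself small : ζ * ζ ^ j' = lam k < ε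
    have hζj : ζ * ζ ^ j' = lam k := by rw [hj, pow_succ]; ring
    -- hence L * ζ^j' * Bd² < (1-τ) * (-φ*/2)
    have hlast : L * ζ ^ j' * Bd^2 < (1 - τ) * (-(phi g h B ω a (dω a))/2) := by
      have h1 : ζ * ζ ^ j' < ε := by rw [hζj]; exact hlamlt
      have h2 : ζ ^ j' * (2*(L * Bd^2 + 1)) < (1 - τ) * (-(phi g h B ω a (dω a))/2) := by
        nlinarith [h1, hεle2, hζ.1, ht0', mul_pos hζ.1 ht0',
          mul_lt_mul_of_pos_right h1 (show (0:ℝ) < 2*(L * Bd^2 + 1) by positivity)]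
      nlinarith [h2, ht0', hL0, hBd0, mul_nonneg (mul_nonneg hL0 ht0'.le) (sq_nonneg Bd)]
    -- contradiction
    have hcontra : (1 - τ) * (-(phi g h B ω a (dω a))/2)
        ≤ (1 - τ) * (-(theta g h B (x k) (dω (x k)))) := by
      have := hτ.2
      nlinarith [hθk]
    linarith [hfin2, hlast, hcontra]
  have hφall : ∀ d', 0 ≤ phi g h B ω a d' := fun d' => le_trans hclaim (hmin a d')
  intro d
  choose Dh hDh using fun i => hslope_tendsto (hh i) a d
  set D : Fin m → ℝ := fun i => ⟪gradient (g i) a, d⟫ + Dh i with hD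
  clear_value D
  have hDieq : ∀ i, D i = ⟪gradient (g i) a, d⟫ + Dh i := fun i => by rw [hD]
  have hdir : ∀ i, HasDirDeriv (fun y => g i y + h i y) a d (D i) := by
    intro i
    rw [hDieq i]
    have h1 := (gslope_tendsto (hg i) a d).add (hDh i)
    exact h1.congr (fun α => by ring)
  have hex : ∃ i, 0 ≤ D i := by
    by_contra hno
    push_neg at hno
    obtain ⟨i1, hi1⟩ := Finite.exists_max D
    have hε : 0 < -(D i1) := by linarith [hno i1]
    have e1 : ∀ᶠ t : ℝ in 𝓝[>] 0, ∀ i, (h i (a + t • d) - h i a) / t ≤ Dh i + -(D i1)/4 :=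
      eventually_all.2 fun i => (hDh i).eventually_le_const
        (show Dh i < Dh i + -(D i1)/4 by linarith)
    have e2 : ∀ᶠ t : ℝ in 𝓝[>] 0, ∀ i,
        t * ((1/2) * |⟪d, B i a d⟫| + ω * ‖d‖^2 / 2) ≤ -(D i1)/4 := by
      refine eventually_all.2 fun i => ?_
      have h0 : Tendsto (fun t : ℝ => t * ((1/2) * |⟪d, B i a d⟫| + ω * ‖d‖^2 / 2))
          (𝓝 (0:ℝ)) (𝓝 (0 * ((1/2) * |⟪d, B i a d⟫| + ω * ‖d‖^2 / 2))) :=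
        Tendsto.mul_const _ tendsto_id
      rw [zero_mul] at h0
      have ht : Tendsto (fun t : ℝ => t * ((1/2) * |⟪d, B i a d⟫| + ω * ‖d‖^2 / 2))
          (𝓝[>] (0:ℝ)) (𝓝 0) := h0.mono_left nhdsWithin_le_nhds
      exact ht.eventually_le_const (show (0:ℝ) < -(D i1)/4 by linarith)
    have e4 : ∀ᶠ t : ℝ in 𝓝[>] 0, (0:ℝ) < t := self_mem_nhdsWithin
    obtain ⟨t, h1, h2, h4⟩ := (e1.and (e2.and e4)).exists
    have hθb : theta g h B a (t • d) ≤ t * D i1 + t * (-(D i1)/2) := by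
      apply theta_le hm
      intro i
      have hBsmul : ⟪t • d, B i a (t • d)⟫ = t * (t * ⟪d, B i a d⟫) := by
        rw [map_smul, real_inner_smul_left, real_inner_smul_right]
      have hgsmul : ⟪gradient (g i) a, t • d⟫ = t * ⟪gradient (g i) a, d⟫ :=
        real_inner_smul_right _ _ _
      have hslope : h i (a + t • d) - h i a ≤ t * Dh i + t * (-(D i1)/4) := by
        have := (div_le_iff₀ h4).1 (h1 i)
        nlinarith [this]
      have hBbd : (1/2) * (t * (t * ⟪d, B i a d⟫)) ≤ t * (-(D i1)/4) := by
        have hc1 : t * ((1/2) * |⟪d, B i a d⟫|) ≤ -(D i1)/4 := by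
          have := h2 i
          nlinarith [mul_nonneg h4.le (by positivity : (0:ℝ) ≤ ω * ‖d‖^2 / 2)]
        have hc2 := mul_le_mul_of_nonneg_left hc1 h4.le
        have hc3 : ⟪d, B i a d⟫ ≤ |⟪d, B i a d⟫| := le_abs_self _
        nlinarith [mul_le_mul_of_nonneg_left hc3
          (by positivity : (0:ℝ) ≤ (1/2) * (t * t)), hc2]
      have hmul : t * (⟪gradient (g i) a, d⟫ + Dh i) ≤ t * D i1 := by
        have := mul_le_mul_of_nonneg_left (hi1 i) h4.le
        rwa [hDieq i] at this
      rw [hgsmul, hBsmul]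
      nlinarith [hslope, hBbd, hmul]
    have hφb : phi g h B ω a (t • d) < 0 := by
      have hnorm : ‖t • d‖^2 = t^2 * ‖d‖^2 := by
        rw [norm_smul, Real.norm_eq_abs, abs_of_pos h4, mul_pow]
      have hω2 : (ω/2) * ‖t • d‖^2 ≤ t * (-(D i1)/4) := by
        have hstep1 : t * (ω * ‖d‖^2 / 2) ≤ -(D i1)/4 := by
          have := h2 i1
          nlinarith [mul_nonneg h4.le (mul_nonneg (by norm_num : (0:ℝ) ≤ 1/2)
            (abs_nonneg (⟪d, B i1 a d⟫)))]
        have hstep2 := mul_le_mul_of_nonneg_left hstep1 h4.le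
        rw [hnorm]
        nlinarith [hstep2]
      have hneg : t * D i1 + t * (-(D i1)/2) + t * (-(D i1)/4) < 0 := by
        nlinarith [mul_pos h4 hε]
      simp only [phi]
      linarith [hθb, hω2, hneg]
    linarith [hφall (t • d), hφb]
  obtain ⟨i, hi⟩ := hex
  exact ⟨i, D i, hdir i, hi⟩
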